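/- Let X, Y be independent random variables with distribution functions F, G such that ‖F*G − Φ‖ ≤ ε, with ε sufficiently small (ε < min{1/4 − Φ(−1), exp(−1/(3−2√2))}), and such that |m(X)| ≤ 2 for some median m(X) of X. Set N = 1 + √(2 log(1/ε)). Then P(|Y| ≥ N) ≤ 6√ε. -/
import Mathlib
set_option maxHeartbeats 1000000


open Real MeasureTheory Set ProbabilityTheory

noncomputable def stdGaussianDensity (t : ℝ) : ℝ :=
  (Real.sqrt (2 * Real.pi))⁻¹ * Real.exp (-t ^ 2 / 2)

noncomputable def stdNormalCDF (x : ℝ) : ℝ :=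
  ∫ t in Set.Iic x, stdGaussianDensity t

lemma stdGaussianDensity_nonneg (t : ℝ) : 0 ≤ stdGaussianDensity t := by
  unfold stdGaussianDensity
  positivity

lemma stdGaussianDensity_neg (t : ℝ) : stdGaussianDensity (-t) = stdGaussianDensity t := by
  simp [stdGaussianDensity, neg_pow]

lemma stdGaussianDensity_integrable : Integrable stdGaussianDensity := by
  have h : Integrable (fun t : ℝ => Real.exp (-(1/2 : ℝ) * t ^ 2)) :=
    integrable_exp_neg_mul_sq (by norm_num)
  have : stdGaussianDensity = fun t =>
      (Real.sqrt (2 * Real.pi))⁻¹ * Real.exp (-(1/2 : ℝ) * t ^ 2) := by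
    funext t; unfold stdGaussianDensity; ring_nf
  rw [this]
  exact h.const_mul _

lemma stdGaussianDensity_total : ∫ t, stdGaussianDensity t = 1 := by
  have h := integral_gaussian (1/2 : ℝ)
  have h2 : (fun t : ℝ => Real.exp (-(1/2 : ℝ) * t ^ 2)) = fun t => Real.exp (-t ^ 2 / 2) := by
    funext t; ring_nf
  rw [h2] at h
  have hπ : (π / (1/2 : ℝ)) = 2 * π := by ring
  rw [hπ] at h
  unfold stdGaussianDensity
  rw [integral_const_mul, h, inv_mul_cancel₀]
  positivity

lemma stdNormalCDF_neg (s : ℝ) : stdNormalCDF (-s) = 1 - stdNormalCDF s := by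
  have hsplit : stdNormalCDF s + ∫ t in Ioi s, stdGaussianDensity t = 1 := by
    have := integral_add_compl (measurableSet_Iic (a := s))
      stdGaussianDensity_integrable (μ := volume)
    rw [compl_Iic] at this
    rw [← stdGaussianDensity_total]
    exact this
  have hneg : stdNormalCDF (-s) = ∫ t in Ioi s, stdGaussianDensity t := by
    unfold stdNormalCDF
    have : ∀ t ∈ Iic (-s), stdGaussianDensity t = stdGaussianDensity (-t) := by
      intro t _; rw [stdGaussianDensity_neg]
    rw [setIntegral_congr_fun measurableSet_Iic this,
      integral_comp_neg_Iic (-s) stdGaussianDensity, neg_neg]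
  linarith

lemma stdNormalCDF_zero : stdNormalCDF 0 = 1 / 2 := by
  have := stdNormalCDF_neg 0
  rw [neg_zero] at this
  linarith

lemma stdNormalCDF_translate (s : ℝ) :
    ∫ t in Iic (-s), stdGaussianDensity (t + s) = stdNormalCDF 0 := by
  unfold stdNormalCDF
  have A : MeasurableEmbedding (fun x : ℝ => x + s) :=
    (Homeomorph.addRight s).isClosedEmbedding.measurableEmbedding
  have h := A.setIntegral_map (μ := (volume : Measure ℝ)) stdGaussianDensity (Iic (0 : ℝ))
  rw [map_add_right_eq_self volume s] at h
  simp only [preimage_add_const_Iic, zero_sub] at h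
  exact h.symm

lemma stdNormalCDF_tail {s : ℝ} (hs : 0 ≤ s) :
    stdNormalCDF (-s) ≤ Real.exp (-s ^ 2 / 2) / 2 := by
  have hmono : stdNormalCDF (-s) ≤
      ∫ t in Iic (-s), Real.exp (-s ^ 2 / 2) * stdGaussianDensity (t + s) := by
    unfold stdNormalCDF
    refine setIntegral_mono_on stdGaussianDensity_integrable.integrableOn ?_
      measurableSet_Iic ?_
    · have A : MeasurableEmbedding (fun x : ℝ => x + s) :=
        (Homeomorph.addRight s).isClosedEmbedding.measurableEmbedding
      have h2 : Integrable stdGaussianDensity (Measure.map (fun x : ℝ => x + s) volume) := by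
        rw [map_add_right_eq_self]; exact stdGaussianDensity_integrable
      have h3 : Integrable (fun t : ℝ => stdGaussianDensity (t + s)) :=
        A.integrable_map_iff.mp h2
      exact (h3.const_mul _).integrableOn
    · intro t ht
      simp only [mem_Iic] at ht
      unfold stdGaussianDensity
      rw [mul_comm (Real.exp (-s ^ 2 / 2)), mul_assoc, ← Real.exp_add]
      have hπ : (0:ℝ) ≤ (Real.sqrt (2 * Real.pi))⁻¹ := by positivity
      refine mul_le_mul_of_nonneg_left ?_ hπ
      apply Real.exp_le_exp.mpr
      nlinarith [mul_nonneg hs (neg_nonneg.mpr (by linarith : t + s ≤ 0))]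
  rw [integral_const_mul, stdNormalCDF_translate, stdNormalCDF_zero] at hmono
  linarith [hmono]

theorem stmt_3 {Ω : Type*} [MeasurableSpace Ω] (μ : Measure Ω) [IsProbabilityMeasure μ]
    (X Y : Ω → ℝ) (hXm : Measurable X) (hYm : Measurable Y)
    (hindep : IndepFun X Y μ)
    (ε : ℝ) (hε0 : 0 < ε)
    (hε : ε < min (1 / 4 - stdNormalCDF (-1)) (Real.exp (-(1 / (3 - 2 * Real.sqrt 2)))))
    (hclose : ∀ x : ℝ, |(μ {ω | X ω + Y ω ≤ x}).toReal - stdNormalCDF x| ≤ ε)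
    (m : ℝ) (hm1 : (1 : ℝ) / 2 ≤ (μ {ω | X ω ≤ m}).toReal)
    (hm2 : (1 : ℝ) / 2 ≤ (μ {ω | m ≤ X ω}).toReal) (hmabs : |m| ≤ 2) :
    (μ {ω | 1 + Real.sqrt (2 * Real.log (1 / ε)) ≤ |Y ω|}).toReal ≤ 6 * Real.sqrt ε := by
  -- basic numeric facts about √2
  set s2 := Real.sqrt 2 with hs2def
  have hs2sq : s2 ^ 2 = 2 := Real.sq_sqrt (by norm_num)
  have hs2pos : 0 < s2 := Real.sqrt_pos.mpr (by norm_num)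
  have hs2lt : s2 < 3/2 := by nlinarith
  have hs2gt : 1 < s2 := by nlinarith
  have hden : (0:ℝ) < 3 - 2 * s2 := by nlinarith
  have hone : 1 / (3 - 2 * s2) = 3 + 2 * s2 := by
    rw [div_eq_iff (ne_of_gt hden)]; nlinarith
  -- L = log (1/ε)
  set L := Real.log (1 / ε) with hLdef
  have hεexp : ε < Real.exp (-(1 / (3 - 2 * s2))) := lt_of_lt_of_le hε (min_le_right _ _)
  have hlogε : Real.log ε < -(1 / (3 - 2 * s2)) := by
    have := Real.log_lt_log hε0 hεexp
    rwa [Real.log_exp] at this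
  have hLlog : L = -Real.log ε := by rw [hLdef, one_div, Real.log_inv]
  have hL : 3 + 2 * s2 < L := by rw [hLlog, ← hone]; linarith
  have hL0 : 0 < L := by nlinarith
  have hε1 : ε < 1 := by
    calc ε < Real.exp (-(1 / (3 - 2 * s2))) := hεexp
    _ < 1 := Real.exp_lt_one_iff.mpr (by rw [hone]; nlinarith)
  -- c = √L
  set c := Real.sqrt L with hcdef
  have hc0 : 0 ≤ c := Real.sqrt_nonneg _
  have hcsq : c ^ 2 = L := Real.sq_sqrt hL0.le
  have hcgt : 1 + s2 < c := by
    refine lt_of_pow_lt_pow_left₀ 2 hc0 ?_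
    rw [hcsq]; nlinarith
  -- N
  set N := 1 + Real.sqrt (2 * L) with hNdef
  have h2L : Real.sqrt (2 * L) = s2 * c := by
    rw [hcdef, hs2def, ← Real.sqrt_mul (by norm_num : (0:ℝ) ≤ 2)]
  have hcN : c + 2 < N := by
    rw [hNdef, h2L]; nlinarith
  -- exp(-c²/2) = √ε
  have hexpc : Real.exp (-c ^ 2 / 2) = Real.sqrt ε := by
    rw [hcsq]
    have h1 : -L / 2 = (-L) / 2 := by ring
    rw [h1, Real.exp_half, hLlog, neg_neg, Real.exp_log hε0]
  -- tail bounds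
  have htail : stdNormalCDF (-c) ≤ Real.sqrt ε / 2 := by
    have := stdNormalCDF_tail hc0
    rwa [hexpc] at this
  have htail' : 1 - stdNormalCDF c ≤ Real.sqrt ε / 2 := by
    rw [← stdNormalCDF_neg]; exact htail
  have hm2' : -2 ≤ m := neg_le_of_abs_le hmabs
  have hm2'' : m ≤ 2 := le_of_abs_le hmabs
  -- measure facts
  have hprob : ∀ s : Set Ω, (μ s).toReal ≤ 1 := fun s => by
    rw [← ENNReal.toReal_one]
    exact ENNReal.toReal_mono ENNReal.one_ne_top prob_le_one
  -- upper tail of Y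
  have hA : (μ (Y ⁻¹' Ici N)).toReal ≤ Real.sqrt ε + 2 * ε := by
    have hprod := hindep.measure_inter_preimage_eq_mul (Ici m) (Ici N)
      measurableSet_Ici measurableSet_Ici
    have hsub : X ⁻¹' Ici m ∩ Y ⁻¹' Ici N ⊆ {ω | X ω + Y ω ≤ c}ᶜ := by
      intro ω hω
      simp only [mem_inter_iff, mem_preimage, mem_Ici] at hω
      simp only [mem_compl_iff, mem_setOf_eq, not_le]
      linarith [hω.1, hω.2]
    have hSm : MeasurableSet {ω | X ω + Y ω ≤ c} :=
      measurableSet_le (hXm.add hYm) measurable_const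
    have hcompl : (μ {ω | X ω + Y ω ≤ c}ᶜ).toReal =
        1 - (μ {ω | X ω + Y ω ≤ c}).toReal := by
      rw [measure_compl hSm (measure_ne_top μ _), measure_univ,
        ENNReal.toReal_sub_of_le prob_le_one ENNReal.one_ne_top, ENNReal.toReal_one]
    have hmono : (μ (X ⁻¹' Ici m ∩ Y ⁻¹' Ici N)).toReal ≤
        (μ {ω | X ω + Y ω ≤ c}ᶜ).toReal :=
      ENNReal.toReal_mono (measure_ne_top μ _) (measure_mono hsub)
    have hF := hclose c
    rw [abs_le] at hF
    have hXge : (1:ℝ)/2 ≤ (μ (X ⁻¹' Ici m)).toReal := hm2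
    have hprodR : (μ (X ⁻¹' Ici m ∩ Y ⁻¹' Ici N)).toReal =
        (μ (X ⁻¹' Ici m)).toReal * (μ (Y ⁻¹' Ici N)).toReal := by
      rw [hprod, ENNReal.toReal_mul]
    have hYnn : 0 ≤ (μ (Y ⁻¹' Ici N)).toReal := ENNReal.toReal_nonneg
    nlinarith [hprob (X ⁻¹' Ici m), hprob (Y ⁻¹' Ici N)]
  -- lower tail of Y
  have hB : (μ (Y ⁻¹' Iic (-N))).toReal ≤ Real.sqrt ε + 2 * ε := by
    have hprod := hindep.measure_inter_preimage_eq_mul (Iic m) (Iic (-N))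
      measurableSet_Iic measurableSet_Iic
    have hsub : X ⁻¹' Iic m ∩ Y ⁻¹' Iic (-N) ⊆ {ω | X ω + Y ω ≤ -c} := by
      intro ω hω
      simp only [mem_inter_iff, mem_preimage, mem_Iic] at hω
      simp only [mem_setOf_eq]
      linarith [hω.1, hω.2]
    have hmono : (μ (X ⁻¹' Iic m ∩ Y ⁻¹' Iic (-N))).toReal ≤
        (μ {ω | X ω + Y ω ≤ -c}).toReal :=
      ENNReal.toReal_mono (measure_ne_top μ _) (measure_mono hsub)
    have hF := hclose (-c)
    rw [abs_le] at hF
    have hXle : (1:ℝ)/2 ≤ (μ (X ⁻¹' Iic m)).toReal := hm1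
    have hprodR : (μ (X ⁻¹' Iic m ∩ Y ⁻¹' Iic (-N))).toReal =
        (μ (X ⁻¹' Iic m)).toReal * (μ (Y ⁻¹' Iic (-N))).toReal := by
      rw [hprod, ENNReal.toReal_mul]
    have hYnn : 0 ≤ (μ (Y ⁻¹' Iic (-N))).toReal := ENNReal.toReal_nonneg
    nlinarith [hprob (X ⁻¹' Iic m), hprob (Y ⁻¹' Iic (-N))]
  -- combine
  have hsub : {ω | N ≤ |Y ω|} ⊆ Y ⁻¹' Ici N ∪ Y ⁻¹' Iic (-N) := by
    intro ω hω
    simp only [mem_setOf_eq] at hω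
    rcases le_abs.mp hω with h | h
    · exact Or.inl h
    · exact Or.inr (by simpa [mem_preimage, mem_Iic] using (by linarith : Y ω ≤ -N))
  have hfinal : (μ {ω | N ≤ |Y ω|}).toReal ≤
      (μ (Y ⁻¹' Ici N)).toReal + (μ (Y ⁻¹' Iic (-N))).toReal := by
    rw [← ENNReal.toReal_add (measure_ne_top μ _) (measure_ne_top μ _)]
    exact ENNReal.toReal_mono (by
      exact ENNReal.add_ne_top.mpr ⟨measure_ne_top μ _, measure_ne_top μ _⟩)
      ((measure_mono hsub).trans (measure_union_le _ _))
  have hεsqrt : ε ≤ Real.sqrt ε := by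
    nlinarith [Real.sq_sqrt hε0.le, Real.sqrt_nonneg ε, sq_nonneg (1 - Real.sqrt ε)]
  calc (μ {ω | N ≤ |Y ω|}).toReal ≤
      (μ (Y ⁻¹' Ici N)).toReal + (μ (Y ⁻¹' Iic (-N))).toReal := hfinal
  _ ≤ (Real.sqrt ε + 2 * ε) + (Real.sqrt ε + 2 * ε) := add_le_add hA hB
  _ ≤ 6 * Real.sqrt ε := by linarith
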